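/- arXiv:2409.08646 — 2 statements merged into one kernel-verified Lean document; each statement's English description precedes it below -/
import Mathlib

section
/- Let F ∈ ℝ^{3×3} with det F > 0, and let F = R√C be its polar decomposition, where C = FᵀF and R = F(√C)^{-1}. Then R ∈ SO(3) and dist(F, SO(3)) = |F − R| = |√C − I|, where |·| is the Frobenius norm and dist(F, SO(3)) = inf_{Q ∈ SO(3)} |F − Q|. -/
open Matrix Set

noncomputable section

abbrev M3 := Matrix (Fin 3) (Fin 3) ℝ

/-- Frobenius norm on `3×3` real matrices. -/
def frob (A : M3) : ℝ := Real.sqrt (∑ i, ∑ j, (A i j) ^ 2)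

/-- The rotation group `SO(3)`. -/
def SO3 : Set M3 := {R : M3 | Rᵀ * R = 1 ∧ R.det = 1}

/-- Frobenius distance to `SO(3)`. -/
def distSO3 (F : M3) : ℝ := sInf ((fun Q => frob (F - Q)) '' SO3)

namespace Matrix.PosSemidef

open scoped ComplexOrder in
/-- The positive semidefinite square root of a positive semidefinite matrix
(the definition `Matrix.PosSemidef.sqrt` of Mathlib, December 2024). -/
def sqrt {n : Type*} [Fintype n] [DecidableEq n] {𝕜 : Type*} [RCLike 𝕜]
    {A : Matrix n n 𝕜} (hA : PosSemidef A) : Matrix n n 𝕜 :=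
  hA.1.eigenvectorUnitary.1 * diagonal ((↑) ∘ (√·) ∘ hA.1.eigenvalues) *
    (star hA.1.eigenvectorUnitary : Matrix n n 𝕜)

end Matrix.PosSemidef

namespace Matrix.PosSemidef

lemma sqrt_mul_self {A : Matrix (Fin 3) (Fin 3) ℝ} (hA : PosSemidef A) : hA.sqrt * hA.sqrt = A := by
  let C : Matrix (Fin 3) (Fin 3) ℝ := hA.1.eigenvectorUnitary
  let E := diagonal ((RCLike.ofReal : ℝ → ℝ) ∘ (√·) ∘ hA.1.eigenvalues)
  suffices C * (E * (star C * C) * E) * star C = A by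
    rw [Matrix.PosSemidef.sqrt]
    simpa only [E, C, ← mul_assoc] using this
  have : star C * C = 1 := by simp [C]
  rw [this, mul_one, diagonal_mul_diagonal]
  conv_rhs => rw [hA.1.spectral_theorem, Unitary.conjStarAlgAut_apply]
  congr 3
  funext i
  simp [E, Real.mul_self_sqrt (hA.eigenvalues_nonneg i)]

lemma posSemidef_sqrt {A : Matrix (Fin 3) (Fin 3) ℝ} (hA : PosSemidef A) : PosSemidef hA.sqrt := by
  unfold Matrix.PosSemidef.sqrt
  have h := (posSemidef_diagonal_iff (d := ((RCLike.ofReal : ℝ → ℝ) ∘ (√·) ∘ hA.1.eigenvalues))).mpr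
    fun i => by simp
  have := h.mul_mul_conjTranspose_same (hA.1.eigenvectorUnitary : Matrix (Fin 3) (Fin 3) ℝ)
  simpa [Matrix.star_eq_conjTranspose] using this

end Matrix.PosSemidef


/-- squared Frobenius norm -/
def frobSq (A : M3) : ℝ := ∑ i, ∑ j, (A i j) ^ 2

lemma frob_eq (A : M3) : frob A = Real.sqrt (frobSq A) := rfl

lemma frobSq_nonneg (A : M3) : 0 ≤ frobSq A :=
  Finset.sum_nonneg fun _ _ => Finset.sum_nonneg fun _ _ => sq_nonneg _

lemma frobSq_eq_trace (A : M3) : frobSq A = (Aᵀ * A).trace := by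
  simp only [frobSq, Matrix.trace, Matrix.diag, Matrix.mul_apply, Matrix.transpose_apply, pow_two]
  exact Finset.sum_comm

lemma frob_le_frob {A B : M3} (h : frobSq A ≤ frobSq B) : frob A ≤ frob B := by
  rw [frob_eq, frob_eq]; exact Real.sqrt_le_sqrt h

/-- key: for `S` PSD and `Q` orthogonal, `trace (S Q) ≤ trace S`. -/
lemma trace_mul_le_trace (S Q : M3) (hS : S.PosSemidef) (hQ : Qᵀ * Q = 1) :
    (S * Q).trace ≤ S.trace := by
  set B := hS.sqrt with hBdef
  have hBB : B * B = S := hS.sqrt_mul_self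
  have hBt : Bᵀ = B := by
    have := hS.posSemidef_sqrt.1
    rwa [Matrix.IsHermitian, Matrix.conjTranspose_eq_transpose_of_trivial] at this
  have hQQ : Q * Qᵀ = 1 := mul_eq_one_comm.mp hQ
  have key : ∀ i : Fin 3, (B * Q * B) i i ≤ (B * B) i i := by
    intro i
    set v : Fin 3 → ℝ := fun j => B i j with hv
    have hvQ : ∀ j, (B * Q) i j = (v ᵥ* Q) j := by
      intro j; simp [Matrix.mul_apply, Matrix.vecMul, dotProduct, hv]
    set w : Fin 3 → ℝ := v ᵥ* Q with hw
    have hsym : ∀ p q, B p q = B q p := fun p q => congrFun (congrFun hBt q) p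
    have hnorm : ∑ j, w j ^ 2 = ∑ j, v j ^ 2 := by
      have h1 : ∑ j, w j ^ 2 = w ⬝ᵥ w := by simp [dotProduct, pow_two]
      have h2 : ∑ j, v j ^ 2 = v ⬝ᵥ v := by simp [dotProduct, pow_two]
      rw [h1, h2, hw, ← Matrix.mulVec_transpose]
      calc (Qᵀ *ᵥ v) ⬝ᵥ (Qᵀ *ᵥ v) = ((Qᵀ *ᵥ v) ᵥ* Qᵀ) ⬝ᵥ v := dotProduct_mulVec _ _ _
        _ = (Q *ᵥ (Qᵀ *ᵥ v)) ⬝ᵥ v := by rw [Matrix.vecMul_transpose]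
        _ = ((Q * Qᵀ) *ᵥ v) ⬝ᵥ v := by rw [Matrix.mulVec_mulVec]
        _ = v ⬝ᵥ v := by rw [hQQ, Matrix.one_mulVec]
    have hBQB : (B * Q * B) i i = ∑ j, w j * v j := by
      rw [Matrix.mul_apply]
      refine Finset.sum_congr rfl fun j _ => ?_
      rw [hvQ j, hsym j i]
    have hBBi : (B * B) i i = ∑ j, v j ^ 2 := by
      rw [Matrix.mul_apply]
      refine Finset.sum_congr rfl fun j _ => ?_
      rw [hsym j i, pow_two]
    rw [hBQB, hBBi]
    have hCS := Finset.sum_mul_sq_le_sq_mul_sq Finset.univ w v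
    rw [show (∑ j, w j ^ 2) = ∑ j, v j ^ 2 from hnorm] at hCS
    have hvnn : 0 ≤ ∑ j, v j ^ 2 := Finset.sum_nonneg fun _ _ => sq_nonneg _
    nlinarith [hCS, hvnn]
  have htr : (S * Q).trace = (B * Q * B).trace := by
    rw [← hBB, mul_assoc, Matrix.trace_mul_comm]
  rw [htr, ← hBB]
  exact Finset.sum_le_sum fun i _ => key i

/-- **Polar decomposition and the distance to `SO(3)`.**  For `F` with
`det F > 0` and polar decomposition `F = R √C`, `C = FᵀF`, `R = F(√C)⁻¹`:
`R ∈ SO(3)` and `dist(F, SO(3)) = |F − R| = |√C − I|`. -/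
theorem polar_decomposition_dist_SO3
    (F : M3) (hF : 0 < F.det) (hC : (Fᵀ * F).PosSemidef) :
    F * hC.sqrt⁻¹ ∈ SO3 ∧
    frob (F - F * hC.sqrt⁻¹) = frob (hC.sqrt - 1) ∧
    distSO3 F = frob (F - F * hC.sqrt⁻¹) ∧
    ∀ Q ∈ SO3, frob (F - F * hC.sqrt⁻¹) ≤ frob (F - Q) := by
  set B := hC.sqrt with hBdef
  have hBB : B * B = Fᵀ * F := hC.sqrt_mul_self
  have hBt : Bᵀ = B := by
    have := hC.posSemidef_sqrt.1
    rwa [Matrix.IsHermitian, Matrix.conjTranspose_eq_transpose_of_trivial] at this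
  have hBpsd : B.PosSemidef := hC.posSemidef_sqrt
  -- det B = det F
  have hdetB_sq : B.det * B.det = F.det * F.det := by
    have := congrArg Matrix.det hBB
    rwa [Matrix.det_mul, Matrix.det_mul, Matrix.det_transpose] at this
  have hdetB_nn : 0 ≤ B.det := by
    rw [hBpsd.1.det_eq_prod_eigenvalues]
    exact Finset.prod_nonneg fun i _ => hBpsd.eigenvalues_nonneg i
  have hdetB : B.det = F.det := by nlinarith
  have hdetB_pos : 0 < B.det := hdetB ▸ hF
  have hBunit : IsUnit B.det := (ne_of_gt hdetB_pos).isUnit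
  have hBinv : B * B⁻¹ = 1 := Matrix.mul_nonsing_inv B hBunit
  have hinvB : B⁻¹ * B = 1 := Matrix.nonsing_inv_mul B hBunit
  set R := F * B⁻¹ with hRdef
  have hRtR : Rᵀ * R = 1 := by
    rw [hRdef, Matrix.transpose_mul, Matrix.transpose_nonsing_inv, hBt]
    calc B⁻¹ * Fᵀ * (F * B⁻¹) = B⁻¹ * (Fᵀ * F) * B⁻¹ := by simp only [mul_assoc]
      _ = B⁻¹ * (B * B) * B⁻¹ := by rw [hBB]
      _ = (B⁻¹ * B) * (B * B⁻¹) := by simp [mul_assoc]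
      _ = 1 := by rw [hinvB, hBinv, one_mul]
  have hdetR : R.det = 1 := by
    rw [hRdef, Matrix.det_mul, Matrix.det_nonsing_inv, Ring.inverse_eq_inv', hdetB]
    field_simp
  have hRSO3 : R ∈ SO3 := ⟨hRtR, hdetR⟩
  have hFRB : F = R * B := by
    rw [hRdef, mul_assoc, hinvB, mul_one]
  -- |F - R| = |B - 1|
  have hfactor : F - R = R * (B - 1) := by rw [mul_sub, mul_one, ← hFRB]
  have hfrob_rot : ∀ A : M3, frobSq (R * A) = frobSq A := by
    intro A
    rw [frobSq_eq_trace, frobSq_eq_trace, Matrix.transpose_mul, mul_assoc, ← mul_assoc Rᵀ R A,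
      hRtR, one_mul]
  have heq2 : frob (F - R) = frob (B - 1) := by
    rw [hfactor, frob_eq, frob_eq, hfrob_rot]
  have hRRt : R * Rᵀ = 1 := mul_eq_one_comm.mp hRtR
  have hFt : Fᵀ = B * Rᵀ := by
    rw [hFRB, Matrix.transpose_mul, hBt]
  -- expansion of the squared distance
  have expand : ∀ P : M3, Pᵀ * P = 1 →
      frobSq (F - P) = (Fᵀ * F).trace - 2 * (Fᵀ * P).trace + 3 := by
    intro P hP
    rw [frobSq_eq_trace, Matrix.transpose_sub, Matrix.sub_mul, Matrix.mul_sub, Matrix.mul_sub,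
      Matrix.trace_sub, Matrix.trace_sub, Matrix.trace_sub, hP]
    have h1 : (Pᵀ * F).trace = (Fᵀ * P).trace := by
      rw [← Matrix.trace_transpose (Pᵀ * F), Matrix.transpose_mul, Matrix.transpose_transpose]
    have h3 : (1 : M3).trace = 3 := by
      simp [Matrix.trace_one]
    rw [h1, h3]
    ring
  have htrR : (Fᵀ * R).trace = B.trace := by
    rw [hFt, mul_assoc, hRtR, mul_one]
  have htrQ : ∀ Q : M3, Qᵀ * Q = 1 → (Fᵀ * Q).trace ≤ B.trace := by
    intro Q hQ
    have hU : (Rᵀ * Q)ᵀ * (Rᵀ * Q) = 1 := by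
      rw [Matrix.transpose_mul, Matrix.transpose_transpose]
      calc Qᵀ * R * (Rᵀ * Q) = Qᵀ * (R * Rᵀ) * Q := by simp only [mul_assoc]
        _ = 1 := by rw [hRRt, mul_one, hQ]
    have h1 : Fᵀ * Q = B * (Rᵀ * Q) := by rw [hFt, mul_assoc]
    rw [h1]
    exact trace_mul_le_trace B (Rᵀ * Q) hBpsd hU
  -- minimality
  have hmin : ∀ Q ∈ SO3, frob (F - R) ≤ frob (F - Q) := by
    intro Q hQ
    obtain ⟨hQo, hQd⟩ := hQ
    apply frob_le_frob
    rw [expand R hRtR, expand Q hQo, htrR]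
    have := htrQ Q hQo
    linarith
  -- the infimum
  have hdist : distSO3 F = frob (F - R) := by
    unfold distSO3
    apply le_antisymm
    · exact csInf_le ⟨frob (F - R), fun x hx => by
        obtain ⟨Q, hQ, rfl⟩ := hx; exact hmin Q hQ⟩ ⟨R, hRSO3, rfl⟩
    · exact le_csInf ⟨frob (F - R), R, hRSO3, rfl⟩ fun x hx => by
        obtain ⟨Q, hQ, rfl⟩ := hx; exact hmin Q hQ
  exact ⟨hRSO3, heq2, hdist, hmin⟩
end
end

section
/- Let W: ℝ^{3×3} → [0,∞] be frame indifferent (W(RF) = W(F) for all R ∈ SO(3)), satisfy W(F) ≥ c·dist²(F,SO(3)) for all F and W(F) ≤ C·dist²(F,SO(3)) when dist²(F,SO(3)) ≤ ρ, and admit a quadratic expansion |W(I+G) − Q(G)| ≤ |G|² r(|G|) with r increasing and r(δ) → 0 as δ → 0, where Q is a quadratic form. Then c|sym G|² ≤ Q(G) ≤ C|sym G|² for all G ∈ ℝ^{3×3}; in particular Q(G) depends only on sym G. -/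
open Matrix Set Filter Topology
open scoped ENNReal

noncomputable section

/-- Symmetric part of a matrix. -/
def symPart (G : M3) : M3 := (1 / 2 : ℝ) • (G + Gᵀ)


attribute [local instance] Matrix.frobeniusSeminormedAddCommGroup
  Matrix.frobeniusNormedAddCommGroup Matrix.frobeniusIsBoundedSMul Matrix.frobeniusNormSMulClass

lemma frob_eq_norm (A : M3) : frob A = ‖A‖ := by
  rw [Matrix.frobenius_norm_def, ← Real.sqrt_eq_rpow, frob]
  congr 1
  refine Finset.sum_congr rfl fun i _ => Finset.sum_congr rfl fun j _ => ?_
  rw [Real.rpow_two, Real.norm_eq_abs, sq_abs]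

lemma one_mem_SO3 : (1 : M3) ∈ SO3 := ⟨by simp, by simp⟩

lemma img_nonempty (F : M3) : ((fun Q => frob (F - Q)) '' SO3).Nonempty :=
  ⟨_, ⟨1, one_mem_SO3, rfl⟩⟩

lemma img_bddBelow (F : M3) : BddBelow ((fun Q => frob (F - Q)) '' SO3) := by
  refine ⟨0, ?_⟩
  rintro x ⟨R, hR, rfl⟩
  have : (0:ℝ) ≤ frob (F - R) := by rw [frob_eq_norm]; exact norm_nonneg _
  exact this

lemma distSO3_nonneg (F : M3) : 0 ≤ distSO3 F := by
  refine le_csInf (img_nonempty F) ?_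
  rintro x ⟨R, hR, rfl⟩
  have : (0:ℝ) ≤ frob (F - R) := by rw [frob_eq_norm]; exact norm_nonneg _
  exact this

lemma distSO3_le (F R : M3) (hR : R ∈ SO3) : distSO3 F ≤ ‖F - R‖ := by
  rw [← frob_eq_norm]; exact csInf_le (img_bddBelow F) ⟨R, hR, rfl⟩

lemma exists_near (F : M3) {ε : ℝ} (hε : 0 < ε) :
    ∃ R ∈ SO3, ‖F - R‖ < distSO3 F + ε := by
  obtain ⟨x, ⟨R, hR, rfl⟩, hx⟩ := (csInf_lt_iff (img_bddBelow F) (img_nonempty F)).mp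
    (lt_add_of_pos_right (distSO3 F) hε)
  exact ⟨R, hR, by rwa [← frob_eq_norm]⟩

lemma symPart_norm_le (M : M3) : ‖symPart M‖ ≤ ‖M‖ := by
  rw [symPart, norm_smul]
  have := norm_add_le M Mᵀ
  rw [Matrix.frobenius_norm_transpose] at this
  rw [Real.norm_eq_abs]
  calc |(1/2 : ℝ)| * ‖M + Mᵀ‖ ≤ |(1/2 : ℝ)| * (‖M‖ + ‖M‖) := by
        apply mul_le_mul_of_nonneg_left this (abs_nonneg _)
    _ = ‖M‖ := by rw [abs_of_pos]; ring; norm_num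

lemma symPart_sub (X Y : M3) : symPart (X - Y) = symPart X - symPart Y := by
  simp only [symPart, transpose_sub]
  module

lemma symPart_add (X Y : M3) : symPart (X + Y) = symPart X + symPart Y := by
  simp only [symPart, transpose_add]
  module

lemma symPart_smul (t : ℝ) (X : M3) : symPart (t • X) = t • symPart X := by
  simp only [symPart, transpose_smul]
  module

-- lower estimate
lemma lower_est (G : M3) : ∃ K : ℝ, 0 ≤ K ∧ ∀ t : ℝ, 0 < t → t ≤ 1 →
    t * ‖symPart G‖ - K * t ^ 2 ≤ distSO3 (1 + t • G) := by
  refine ⟨1 + (2 * ‖G‖ + 1) ^ 2 / 2, by positivity, fun t ht ht1 => ?_⟩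
  set F := 1 + t • G with hF
  obtain ⟨R, hR, hRnear⟩ := exists_near F (by positivity : (0:ℝ) < t ^ 2)
  set K := R - 1 with hK
  have hFR : F - R = t • G - K := by rw [hF, hK]; abel
  have hRK : R = 1 + K := by rw [hK]; abel
  have horth : K + Kᵀ = -(Kᵀ * K) := by
    have h1 : (1 + K)ᵀ * (1 + K) = 1 := by rw [← hRK]; exact hR.1
    have hexpand : (1 + K)ᵀ * (1 + K) = 1 + (K + Kᵀ + Kᵀ * K) := by
      simp only [transpose_add, transpose_one, add_mul, mul_add, one_mul, mul_one]
      abel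
    have h4 : (1 : M3) + (K + Kᵀ + Kᵀ * K) = 1 := hexpand ▸ h1
    have h5 : K + Kᵀ + Kᵀ * K = 0 := by
      have := congrArg (fun X : M3 => X - 1) h4
      simpa using this
    rw [eq_neg_iff_add_eq_zero]
    calc K + Kᵀ + Kᵀ * K = K + Kᵀ + Kᵀ * K := rfl
      _ = 0 := h5
  have hsymK : symPart K = (-(1/2) : ℝ) • (Kᵀ * K) := by
    rw [symPart, horth]; module
  have hnK : ‖symPart K‖ ≤ ‖K‖ ^ 2 / 2 := by
    rw [hsymK, norm_smul, Real.norm_eq_abs]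
    have h2 : ‖Kᵀ * K‖ ≤ ‖K‖ * ‖K‖ := by
      calc ‖Kᵀ * K‖ ≤ ‖Kᵀ‖ * ‖K‖ := Matrix.frobenius_norm_mul _ _
        _ = ‖K‖ * ‖K‖ := by rw [Matrix.frobenius_norm_transpose]
    rw [show |(-(1/2) : ℝ)| = 1/2 by norm_num]
    nlinarith [norm_nonneg Kᵀ]
  -- ‖K‖ bound
  have hdle : distSO3 F ≤ t * ‖G‖ := by
    have := distSO3_le F 1 one_mem_SO3
    calc distSO3 F ≤ ‖F - 1‖ := this
      _ = t * ‖G‖ := by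
          rw [hF, show (1 : M3) + t • G - 1 = t • G by abel, norm_smul, Real.norm_eq_abs,
            abs_of_pos ht]
  have hKsmall : ‖K‖ ≤ 2 * t * ‖G‖ + t ^ 2 := by
    have : ‖K‖ ≤ ‖t • G‖ + ‖t • G - K‖ := by
      have h8 := norm_sub_le (t • G) (t • G - K)
      rwa [show t • G - (t • G - K) = K from by abel] at h8
    rw [← hFR] at this
    have h3 : ‖t • G‖ = t * ‖G‖ := by rw [norm_smul, Real.norm_eq_abs, abs_of_pos ht]
    nlinarith [hRnear, hdle]
  -- main chain
  have hmain : t * ‖symPart G‖ - ‖K‖ ^ 2 / 2 ≤ ‖F - R‖ := by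
    have h4 : symPart (t • G - K) = t • symPart G - symPart K := by
      rw [symPart_sub, symPart_smul]
    have h5 : ‖symPart (t • G - K)‖ ≤ ‖F - R‖ := by rw [hFR]; exact symPart_norm_le _
    have h6 : t * ‖symPart G‖ - ‖symPart K‖ ≤ ‖symPart (t • G - K)‖ := by
      rw [h4]
      have := norm_sub_norm_le (t • symPart G) (symPart K)
      rw [norm_smul, Real.norm_eq_abs, abs_of_pos ht] at this
      linarith
    linarith [hnK]
  have hKsq : ‖K‖ ^ 2 ≤ (t * (2 * ‖G‖ + 1)) ^ 2 := by
    have h7 : ‖K‖ ≤ t * (2 * ‖G‖ + 1) := by nlinarith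
    nlinarith [norm_nonneg K]
  nlinarith [hRnear, hmain]

lemma upper_est (G : M3) : ∃ K : ℝ, 0 ≤ K ∧ ∀ᶠ t : ℝ in 𝓝[>] 0,
    distSO3 (1 + t • G) ≤ t * ‖symPart G‖ + K * t ^ 2 := by
  set A := G - symPart G with hA
  have hAT : Aᵀ = -A := by
    rw [hA, symPart]
    simp only [transpose_sub, transpose_smul, transpose_add, transpose_transpose]
    module
  refine ⟨‖A‖ * ‖symPart G‖ + ‖A * G‖ / 2 + ‖A‖ * ‖A * G‖ / 2, by positivity, ?_⟩
  -- eventual facts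
  have hcontP : Continuous fun t : ℝ => ((1 : M3) - (t / 2) • A) := by
    exact continuous_const.sub ((continuous_id.div_const 2).smul continuous_const)
  have hcont : Continuous fun t : ℝ => ((1 : M3) - (t / 2) • A).det :=
    hcontP.matrix_det
  have hdetne : ∀ᶠ t : ℝ in 𝓝 (0 : ℝ), ((1 : M3) - (t / 2) • A).det ≠ 0 := by
    have h0 : ((1 : M3) - ((0 : ℝ) / 2) • A).det = 1 := by norm_num
    have := (hcont.tendsto 0).eventually_ne (by rw [h0]; norm_num : ((1 : M3) - ((0:ℝ) / 2) • A).det ≠ 0)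
    exact this
  have hE1 : ∀ᶠ t : ℝ in 𝓝[>] (0 : ℝ), ((1 : M3) - (t / 2) • A).det ≠ 0 :=
    hdetne.filter_mono nhdsWithin_le_nhds
  have hE2 : ∀ᶠ t : ℝ in 𝓝[>] (0 : ℝ), t < 1 / (‖A‖ + 1) :=
    Filter.Eventually.filter_mono nhdsWithin_le_nhds
      (gt_mem_nhds (by positivity : (0 : ℝ) < 1 / (‖A‖ + 1)))
  have hE3 : ∀ᶠ t : ℝ in 𝓝[>] (0 : ℝ), 0 < t := self_mem_nhdsWithin
  have hE4 : ∀ᶠ t : ℝ in 𝓝[>] (0 : ℝ), t < 1 :=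
    Filter.Eventually.filter_mono nhdsWithin_le_nhds (gt_mem_nhds one_pos)
  filter_upwards [hE1, hE2, hE3, hE4] with t hdet0 htsmall ht ht1
  set P : M3 := (1 : M3) - (t / 2) • A with hP
  set S : M3 := (1 : M3) + (t / 2) • A with hS
  have hPT : Pᵀ = S := by
    rw [hP, hS, transpose_sub, transpose_one, transpose_smul, hAT]
    module
  have hST : Sᵀ = P := by rw [← hPT, transpose_transpose]
  have hdetP : IsUnit P.det := isUnit_iff_ne_zero.mpr hdet0
  have hdetSP : S.det = P.det := by rw [← hPT, det_transpose]
  have hdetS : IsUnit S.det := by rw [hdetSP]; exact hdetP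
  have hPS : P * S = S * P := by
    rw [hP, hS]
    simp only [sub_mul, mul_sub, add_mul, mul_add, one_mul, mul_one,
      Matrix.smul_mul, Matrix.mul_smul, smul_smul]
    abel
  set R : M3 := P⁻¹ * S with hRdef
  have hRSO3 : R ∈ SO3 := by
    constructor
    · have hRT : Rᵀ = P * S⁻¹ := by
        rw [hRdef, transpose_mul, Matrix.transpose_nonsing_inv, hPT, hST]
      rw [hRT, hRdef]
      calc P * S⁻¹ * (P⁻¹ * S) = P * (S⁻¹ * P⁻¹) * S := by
            simp only [Matrix.mul_assoc]
        _ = P * (P * S)⁻¹ * S := by rw [Matrix.mul_inv_rev]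
        _ = P * (S * P)⁻¹ * S := by rw [hPS]
        _ = P * (P⁻¹ * S⁻¹) * S := by rw [Matrix.mul_inv_rev]
        _ = (P * P⁻¹) * (S⁻¹ * S) := by simp only [Matrix.mul_assoc]
        _ = 1 := by
            rw [Matrix.mul_nonsing_inv _ hdetP, Matrix.nonsing_inv_mul _ hdetS, one_mul]
    · rw [hRdef, det_mul, Matrix.det_nonsing_inv, hdetSP, Ring.inverse_mul_cancel _ hdetP]
  set M : M3 := t • symPart G - (t ^ 2 / 2) • (A * G) with hM
  have hId : P * (1 + t • G) = S + M := by
    rw [hP, hS, hM, hA]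
    simp only [sub_mul, mul_add, mul_one, one_mul, Matrix.smul_mul, Matrix.mul_smul,
      smul_smul, smul_sub, sub_smul, smul_add]
    module
  have h1tGR : (1 + t • G) - R = P⁻¹ * M := by
    have h : P⁻¹ * (P * (1 + t • G)) = P⁻¹ * (S + M) := by rw [hId]
    rw [Matrix.nonsing_inv_mul_cancel_left _ _ hdetP, mul_add, ← hRdef] at h
    rw [h]
    abel
  have hPinv : P⁻¹ = 1 + (t / 2) • (A * P⁻¹) := by
    have h := Matrix.mul_nonsing_inv P hdetP
    have h2 : ((1 : M3) - (t / 2) • A) * P⁻¹ = 1 := by rw [← hP]; exact h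
    rw [sub_mul, one_mul, Matrix.smul_mul] at h2
    exact eq_add_of_sub_eq h2
  have hPM : P⁻¹ * M = M + (t / 2) • (A * (P⁻¹ * M)) := by
    calc P⁻¹ * M = (1 + (t / 2) • (A * P⁻¹)) * M := by rw [← hPinv]
      _ = M + (t / 2) • (A * (P⁻¹ * M)) := by
          rw [add_mul, one_mul, Matrix.smul_mul, Matrix.mul_assoc]
  have hMnorm : ‖M‖ ≤ t * ‖symPart G‖ + t ^ 2 / 2 * ‖A * G‖ := by
    rw [hM]
    refine le_trans (norm_sub_le _ _) ?_
    rw [norm_smul, norm_smul, Real.norm_eq_abs, Real.norm_eq_abs,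
      abs_of_pos ht, abs_of_pos (by positivity : (0:ℝ) < t ^ 2 / 2)]
  have hPMnorm : ‖P⁻¹ * M‖ ≤ ‖M‖ + (t / 2) * ‖A‖ * ‖P⁻¹ * M‖ := by
    calc ‖P⁻¹ * M‖ = ‖M + (t / 2) • (A * (P⁻¹ * M))‖ := congrArg norm hPM
      _ ≤ ‖M‖ + ‖(t / 2) • (A * (P⁻¹ * M))‖ := norm_add_le _ _
      _ ≤ ‖M‖ + (t / 2) * ‖A‖ * ‖P⁻¹ * M‖ := by
          rw [norm_smul, Real.norm_eq_abs, abs_of_pos (by positivity : (0:ℝ) < t / 2)]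
          have := Matrix.frobenius_norm_mul A (P⁻¹ * M)
          nlinarith
  have hq : t / 2 * ‖A‖ ≤ 1 / 2 := by
    have h1 : t * (‖A‖ + 1) < 1 := by
      rw [← lt_div_iff₀ (by positivity : (0:ℝ) < ‖A‖ + 1)]
      exact htsmall
    nlinarith [norm_nonneg A]
  have hPM2 : ‖P⁻¹ * M‖ ≤ 2 * ‖M‖ := by
    nlinarith [norm_nonneg (P⁻¹ * M), norm_nonneg M]
  have hfinal : ‖P⁻¹ * M‖ ≤ t * ‖symPart G‖ +
      (‖A‖ * ‖symPart G‖ + ‖A * G‖ / 2 + ‖A‖ * ‖A * G‖ / 2) * t ^ 2 := by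
    have h5 : ‖P⁻¹ * M‖ ≤ ‖M‖ + t * ‖A‖ * ‖M‖ := by
      have hx := mul_le_mul_of_nonneg_left hPM2 (by positivity : (0:ℝ) ≤ t / 2 * ‖A‖)
      nlinarith [hx]
    have hb : ‖P⁻¹ * M‖ ≤ (1 + t * ‖A‖) * (t * ‖symPart G‖ + t ^ 2 / 2 * ‖A * G‖) := by
      have hy := mul_le_mul_of_nonneg_left hMnorm (by positivity : (0:ℝ) ≤ 1 + t * ‖A‖)
      nlinarith [hy]
    have hd : (0:ℝ) ≤ t ^ 2 * (‖A‖ * ‖A * G‖) * (1 - t) :=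
      mul_nonneg (by positivity) (by linarith)
    nlinarith [hb, hd]
  calc distSO3 (1 + t • G) ≤ ‖(1 + t • G) - R‖ := distSO3_le _ _ hRSO3
    _ = ‖P⁻¹ * M‖ := by rw [h1tGR]
    _ ≤ _ := hfinal

/-- **Bounds on the quadratic form in the expansion of a frame-indifferent,
non-degenerate energy density:** `c|sym G|² ≤ Q(G) ≤ C|sym G|²`, and `Q`
depends only on the symmetric part. -/
theorem quadratic_form_bounds
    (W : M3 → ℝ≥0∞) (Q : M3 → ℝ) (r : ℝ → ℝ≥0∞) (c C ρ : ℝ)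
    (hc : 0 < c) (hcC : c ≤ C) (hρ : 0 < ρ)
    (hframe : ∀ R F : M3, R ∈ SO3 → W (R * F) = W F)
    (hlow : ∀ F : M3, ENNReal.ofReal (c * distSO3 F ^ 2) ≤ W F)
    (hup : ∀ F : M3, distSO3 F ^ 2 ≤ ρ → W F ≤ ENNReal.ofReal (C * distSO3 F ^ 2))
    (hQ : ∃ B : M3 →ₗ[ℝ] M3 →ₗ[ℝ] ℝ, ∀ G, Q G = B G G)
    (hrmono : ∀ a b : ℝ, 0 ≤ a → a ≤ b → r a ≤ r b)
    (hr0 : Tendsto r (𝓝[>] (0 : ℝ)) (𝓝 0))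
    (hexp : ∀ G : M3, r (frob G) ≠ ⊤ →
      W (1 + G) ≠ ⊤ ∧ |(W (1 + G)).toReal - Q G| ≤ frob G ^ 2 * (r (frob G)).toReal) :
    (∀ G : M3, c * frob (symPart G) ^ 2 ≤ Q G ∧ Q G ≤ C * frob (symPart G) ^ 2) ∧
    ∀ G G' : M3, symPart G = symPart G' → Q G = Q G' := by
  obtain ⟨B, hB⟩ := hQ
  have hC0 : (0:ℝ) < C := lt_of_lt_of_le hc hcC
  have hf0 : frob (0 : M3) = 0 := by rw [frob_eq_norm]; simp
  have key : ∀ G : M3, c * frob (symPart G) ^ 2 ≤ Q G ∧ Q G ≤ C * frob (symPart G) ^ 2 := by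
    intro G
    by_cases hG : G = 0
    · subst hG
      have h1 : symPart (0 : M3) = 0 := by rw [symPart]; simp
      have h3 : Q 0 = 0 := by rw [hB]; simp
      rw [h1, hf0, h3]; norm_num
    have hGn : 0 < ‖G‖ := norm_pos_iff.mpr hG
    set s := ‖symPart G‖ with hs
    set ε : ℝ → ℝ := fun t => (r (t * ‖G‖)).toReal with hε
    have hmap : Tendsto (fun t : ℝ => t * ‖G‖) (𝓝[>] 0) (𝓝[>] 0) := by
      apply tendsto_nhdsWithin_of_tendsto_nhds_of_eventually_within
      · have h2 : Tendsto (fun t : ℝ => t * ‖G‖) (𝓝 0) (𝓝 (0 * ‖G‖)) :=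
          (continuous_id.mul continuous_const).tendsto 0
        rw [zero_mul] at h2
        exact h2.mono_left nhdsWithin_le_nhds
      · filter_upwards [self_mem_nhdsWithin] with t ht
        exact mul_pos ht hGn
    have hrcomp : Tendsto (fun t : ℝ => r (t * ‖G‖)) (𝓝[>] 0) (𝓝 0) := hr0.comp hmap
    have hεtend : Tendsto ε (𝓝[>] 0) (𝓝 0) := by
      have := (ENNReal.tendsto_toReal (by simp : (0:ℝ≥0∞) ≠ ⊤)).comp hrcomp
      exact this
    obtain ⟨K₁, hK₁, hub⟩ := upper_est G
    obtain ⟨K₂, hK₂, hlb⟩ := lower_est G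
    have hlt1 : ∀ᶠ t : ℝ in 𝓝[>] 0, r (t * ‖G‖) < 1 :=
      hrcomp.eventually_lt_const (by norm_num : (0:ℝ≥0∞) < 1)
    have hEpos : ∀ᶠ t : ℝ in 𝓝[>] (0:ℝ), 0 < t := self_mem_nhdsWithin
    have hE1 : ∀ᶠ t : ℝ in 𝓝[>] (0:ℝ), t < 1 :=
      Filter.Eventually.filter_mono nhdsWithin_le_nhds (gt_mem_nhds one_pos)
    have hEρ : ∀ᶠ t : ℝ in 𝓝[>] (0:ℝ), t < Real.sqrt ρ / ‖G‖ :=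
      Filter.Eventually.filter_mono nhdsWithin_le_nhds
        (gt_mem_nhds (by positivity : 0 < Real.sqrt ρ / ‖G‖))
    have hevmain : ∀ᶠ t : ℝ in 𝓝[>] (0:ℝ),
        c * max (s - K₂ * t) 0 ^ 2 - ‖G‖ ^ 2 * ε t ≤ Q G ∧
        Q G ≤ C * (s + K₁ * t) ^ 2 + ‖G‖ ^ 2 * ε t := by
      filter_upwards [hub, hlt1, hEpos, hE1, hEρ] with t hubt hlt1t ht ht1 htρ
      set d := distSO3 (1 + t • G) with hd
      have hd0 : 0 ≤ d := distSO3_nonneg _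
      have hdub : d ≤ t * s + K₁ * t ^ 2 := hubt
      have hdlb : t * s - K₂ * t ^ 2 ≤ d := hlb t ht ht1.le
      have hdmax : t * max (s - K₂ * t) 0 ≤ d := by
        rcases le_total (s - K₂ * t) 0 with h | h
        · rw [max_eq_right h]; nlinarith
        · rw [max_eq_left h]; nlinarith
      have hdtriv : d ≤ t * ‖G‖ := by
        have h2 := distSO3_le (1 + t • G) 1 one_mem_SO3
        rw [show (1 : M3) + t • G - 1 = t • G from by abel, norm_smul, Real.norm_eq_abs,
          abs_of_pos ht] at h2
        exact h2
      have hρcond : d ^ 2 ≤ ρ := by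
        have hsq := Real.sq_sqrt hρ.le
        have h3 : t * ‖G‖ < Real.sqrt ρ := by
          rw [div_eq_mul_inv] at htρ
          calc t * ‖G‖ < Real.sqrt ρ * ‖G‖⁻¹ * ‖G‖ := by
                exact mul_lt_mul_of_pos_right htρ hGn
            _ = Real.sqrt ρ := by field_simp
        nlinarith [Real.sqrt_nonneg ρ]
      have hfr : frob (t • G) = t * ‖G‖ := by
        rw [frob_eq_norm, norm_smul, Real.norm_eq_abs, abs_of_pos ht]
      have hfint : r (frob (t • G)) ≠ ⊤ := by
        rw [hfr]; exact ne_top_of_lt hlt1t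
      obtain ⟨hWfin, hWQ⟩ := hexp (t • G) hfint
      have hQt : Q (t • G) = t ^ 2 * Q G := by
        simp only [hB, _root_.map_smul, LinearMap.smul_apply, smul_eq_mul]; ring
      rw [hQt, hfr] at hWQ
      have hWQ' : |(W (1 + t • G)).toReal - t ^ 2 * Q G| ≤ t ^ 2 * ‖G‖ ^ 2 * ε t := by
        calc |(W (1 + t • G)).toReal - t ^ 2 * Q G| ≤ (t * ‖G‖) ^ 2 * ε t := by
              rw [hε]; exact hWQ
          _ = t ^ 2 * ‖G‖ ^ 2 * ε t := by ring
      obtain ⟨hWQ1, hWQ2⟩ := abs_sub_le_iff.mp hWQ'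
      have hlowt : c * d ^ 2 ≤ (W (1 + t • G)).toReal :=
        (ENNReal.ofReal_le_iff_le_toReal hWfin).mp (hlow _)
      have hupt : (W (1 + t • G)).toReal ≤ C * d ^ 2 :=
        ENNReal.toReal_le_of_le_ofReal (by positivity) (hup _ hρcond)
      have hε0 : 0 ≤ ε t := ENNReal.toReal_nonneg
      constructor
      · -- lower bound
        have h4 : (t * max (s - K₂ * t) 0) ^ 2 ≤ d ^ 2 :=
          pow_le_pow_left₀ (by positivity) hdmax 2
        have h5 : t ^ 2 * (c * max (s - K₂ * t) 0 ^ 2) ≤ t ^ 2 * (Q G + ‖G‖ ^ 2 * ε t) := by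
          have ha := mul_le_mul_of_nonneg_left h4 hc.le
          linarith
        have := (mul_le_mul_iff_right₀ (by positivity : (0:ℝ) < t ^ 2)).mp h5
        linarith
      · -- upper bound
        have h4 : d ^ 2 ≤ (t * s + K₁ * t ^ 2) ^ 2 :=
          pow_le_pow_left₀ hd0 hdub 2
        have h5 : t ^ 2 * Q G ≤ t ^ 2 * (C * (s + K₁ * t) ^ 2 + ‖G‖ ^ 2 * ε t) := by
          have hb := mul_le_mul_of_nonneg_left h4 hC0.le
          linarith
        have := (mul_le_mul_iff_right₀ (by positivity : (0:ℝ) < t ^ 2)).mp h5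
        linarith
    have hfrs : frob (symPart G) = s := frob_eq_norm _
    constructor
    · -- c * s^2 ≤ Q G
      have hgtend : Tendsto (fun t : ℝ => c * max (s - K₂ * t) 0 ^ 2 - ‖G‖ ^ 2 * ε t)
          (𝓝[>] 0) (𝓝 (c * s ^ 2)) := by
        have hcont : Continuous fun t : ℝ => c * max (s - K₂ * t) 0 ^ 2 :=
          continuous_const.mul
            (((continuous_const.sub (continuous_const.mul continuous_id)).max
              continuous_const).pow 2)
        have h1 := (hcont.tendsto 0).mono_left (nhdsWithin_le_nhds (s := Ioi (0:ℝ)))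
        have h2 : c * max (s - K₂ * 0) 0 ^ 2 = c * s ^ 2 := by
          rw [mul_zero, sub_zero, max_eq_left (norm_nonneg _)]
        rw [h2] at h1
        have h3 := hεtend.const_mul (‖G‖ ^ 2)
        have := h1.sub h3
        simpa using this
      have := le_of_tendsto hgtend (hevmain.mono fun t ht => ht.1)
      rwa [hfrs]
    · -- Q G ≤ C * s^2
      have hftend : Tendsto (fun t : ℝ => C * (s + K₁ * t) ^ 2 + ‖G‖ ^ 2 * ε t)
          (𝓝[>] 0) (𝓝 (C * s ^ 2)) := by
        have hcont : Continuous fun t : ℝ => C * (s + K₁ * t) ^ 2 := by fun_prop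
        have h1 := (hcont.tendsto 0).mono_left (nhdsWithin_le_nhds (s := Ioi (0:ℝ)))
        have h2 : C * (s + K₁ * 0) ^ 2 = C * s ^ 2 := by ring
        rw [h2] at h1
        have h3 := hεtend.const_mul (‖G‖ ^ 2)
        have := h1.add h3
        simpa using this
      have := ge_of_tendsto hftend (hevmain.mono fun t ht => ht.2)
      rwa [hfrs]
  refine ⟨key, fun G G' hGG' => ?_⟩
  have hsymA : symPart (G' - G) = 0 := by rw [symPart_sub, hGG', sub_self]
  have hQA : Q (G' - G) = 0 := by
    have h := key (G' - G)
    rw [hsymA, hf0] at h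
    nlinarith [h.1, h.2]
  have hBA : B (G' - G) (G' - G) = 0 := by rw [← hB]; exact hQA
  set m := B G (G' - G) + B (G' - G) G with hm
  have hexpand : ∀ t : ℝ, Q (G + t • (G' - G)) = Q G + t * m := by
    intro t
    simp only [hB, map_add, _root_.map_smul, LinearMap.add_apply, LinearMap.smul_apply,
      smul_eq_mul, hBA, mul_zero, add_zero, hm]
    ring
  have hsymt : ∀ t : ℝ, symPart (G + t • (G' - G)) = symPart G := by
    intro t; rw [symPart_add, symPart_smul, hsymA, smul_zero, add_zero]
  have hm0 : m = 0 := by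
    by_contra hm0
    have h := (key (G + ((C * frob (symPart G) ^ 2 - Q G + 1) / m) • (G' - G))).2
    rw [hsymt, hexpand, div_mul_cancel₀ _ hm0] at h
    linarith
  have hG' : G' = G + (1:ℝ) • (G' - G) := by rw [one_smul]; abel
  rw [hG', hexpand 1, hm0, mul_zero, add_zero]
end
end
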